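/- For every Δ ≥ 0 and D ≥ 1, the following orthogonality relations hold among the QAOA states on the alternative Bethe lattice: (i) ⟨Ψ^(Δ,D) | Ψ_l^(Δ,D)⟩ = 0 for all 1 ≤ l ≤ p; (ii) ⟨Ψ_l^(Δ,D) | Ψ_{m,n}^(Δ,D)⟩ = 0 for all 1 ≤ l ≤ p and 1 ≤ m < n ≤ p; and (iii) ⟨Ψ^(Δ,D) | Ψ_{l,m}^(Δ,D)⟩ = G^(sym,Δ,D)_{l,m} for all 1 ≤ l < m ≤ p. -/

import Mathlib

open scoped BigOperators

noncomputable section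

namespace QAOA

/-- The vertex set of the alternative Bethe lattice of degree `D` and depth `Δ`:
all tuples in `[D]^k` for `0 ≤ k ≤ Δ` (the root being the empty tuple). -/
abbrev Vertex (Δ D : ℕ) : Type := Σ k : Fin (Δ + 1), Fin (k : ℕ) → Fin D

/-- Spin configurations on the lattice: `{±1}^V`. -/
abbrev Spin (Δ D : ℕ) : Type := Vertex Δ D → ℤˣ

/-- The Hilbert space `ℂ^S` of the lattice, where `S` is the set of spin configurations. -/
abbrev Hs (Δ D : ℕ) : Type := EuclideanSpace ℂ (Spin Δ D)

/-- The root vertex (the empty tuple). -/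
def root (Δ D : ℕ) : Vertex Δ D := ⟨⟨0, Nat.succ_pos Δ⟩, Fin.elim0⟩

/-- The `j`-th child `(v, j)` of a vertex `v` of depth `< Δ`. -/
def child {Δ D : ℕ} (v : Vertex Δ D) (h : (v.1 : ℕ) < Δ) (j : Fin D) : Vertex Δ D :=
  ⟨⟨(v.1 : ℕ) + 1, by omega⟩, Fin.snoc v.2 j⟩

/-- The operator `Z_v`: multiplies the basis vector of a configuration by its spin at `v`. -/
def Zop (Δ D : ℕ) (v : Vertex Δ D) : Matrix (Spin Δ D) (Spin Δ D) ℂ :=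
  Matrix.diagonal fun σ => ((σ v : ℤ) : ℂ)

/-- The operator `X_v`: flips the spin at `v`. -/
def Xop (Δ D : ℕ) (v : Vertex Δ D) : Matrix (Spin Δ D) (Spin Δ D) ℂ :=
  Matrix.of fun σ τ => if σ = Function.update τ v (-τ v) then 1 else 0

/-- The cost Hamiltonian `C = D^{−1/2} Σ_{edges (v,(v,j))} Z_v Z_{(v,j)}`. -/
def Cop (Δ D : ℕ) : Matrix (Spin Δ D) (Spin Δ D) ℂ :=
  ((Real.sqrt D : ℂ))⁻¹ •
    ∑ v : Vertex Δ D, ∑ j : Fin D,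
      if h : (v.1 : ℕ) < Δ then Zop Δ D v * Zop Δ D (child v h j) else 0

/-- The mixer Hamiltonian `B = Σ_v X_v`. -/
def Bop (Δ D : ℕ) : Matrix (Spin Δ D) (Spin Δ D) ℂ := ∑ v : Vertex Δ D, Xop Δ D v

/-- The normalized uniform superposition `|+⟩` of all spin configurations. -/
def plus (Δ D : ℕ) : Hs Δ D :=
  (WithLp.equiv 2 _).symm fun _ => ((Real.sqrt (Fintype.card (Spin Δ D)) : ℂ))⁻¹

/-- Action of a matrix on a state of the lattice Hilbert space. -/
def mApply {Δ D : ℕ} (M : Matrix (Spin Δ D) (Spin Δ D) ℂ) (x : Hs Δ D) : Hs Δ D :=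
  (WithLp.equiv 2 _).symm (M.mulVec (WithLp.equiv 2 _ x))

/-- `prodAsc f a b = f a * f (a+1) * ⋯ * f b` (identity if `a > b`). -/
def prodAsc {M : Type*} [Monoid M] (f : ℕ → M) (a b : ℕ) : M :=
  ((List.range' a (b + 1 - a)).map f).prod

/-- `prodDesc f a b = f b * f (b-1) * ⋯ * f a` (identity if `a > b`). -/
def prodDesc {M : Type*} [Monoid M] (f : ℕ → M) (a b : ℕ) : M :=
  (((List.range' a (b + 1 - a)).reverse).map f).prod

/-- The `t`-th QAOA layer `e^{−iβ_t B} e^{−iγ_t C}`. -/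
def layer (Δ D : ℕ) (γ β : ℕ → ℝ) (t : ℕ) : Matrix (Spin Δ D) (Spin Δ D) ℂ :=
  NormedSpace.exp ((-(Complex.I * (β t : ℂ))) • Bop Δ D) *
    NormedSpace.exp ((-(Complex.I * (γ t : ℂ))) • Cop Δ D)

/-- The adjoint `e^{iγ_t C} e^{iβ_t B}` of the `t`-th QAOA layer. -/
def layerAdj (Δ D : ℕ) (γ β : ℕ → ℝ) (t : ℕ) : Matrix (Spin Δ D) (Spin Δ D) ℂ :=
  NormedSpace.exp ((Complex.I * (γ t : ℂ)) • Cop Δ D) *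
    NormedSpace.exp ((Complex.I * (β t : ℂ)) • Bop Δ D)

/-- The level-`p` QAOA state `|Ψ^(Δ,D)⟩ = e^{−iβ_p B} e^{−iγ_p C} ⋯ e^{−iβ_1 B} e^{−iγ_1 C} |+⟩`. -/
def psi (Δ D p : ℕ) (γ β : ℕ → ℝ) : Hs Δ D :=
  mApply (prodDesc (layer Δ D γ β) 1 p) (plus Δ D)

/-- The QAOA state with a single `Z_∅` inserted immediately before layer `l`. -/
def psiZ (Δ D p : ℕ) (γ β : ℕ → ℝ) (l : ℕ) : Hs Δ D :=
  mApply
    (prodDesc (layer Δ D γ β) l p * Zop Δ D (root Δ D) * prodDesc (layer Δ D γ β) 1 (l - 1))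
    (plus Δ D)

/-- The QAOA state with `Z_∅` inserted before layers `l` and `m` (`l < m`). -/
def psiZZ (Δ D p : ℕ) (γ β : ℕ → ℝ) (l m : ℕ) : Hs Δ D :=
  mApply
    (prodDesc (layer Δ D γ β) m p * Zop Δ D (root Δ D) *
      prodDesc (layer Δ D γ β) l (m - 1) * Zop Δ D (root Δ D) *
      prodDesc (layer Δ D γ β) 1 (l - 1))
    (plus Δ D)

/-- The symmetric `G` matrix entry `G^(sym,Δ,D)_{j,k}`: the two-times autocorrelation of
`Z_∅` with insertions before layers `j` and `k`, extended symmetrically (via `min`/`max`)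
to all `j, k`. -/
def Gsym (Δ D p : ℕ) (γ β : ℕ → ℝ) (j k : ℕ) : ℂ :=
  inner ℂ (plus Δ D)
    (mApply
      (prodAsc (layerAdj Δ D γ β) 1 p * prodDesc (layer Δ D γ β) (max j k) p *
        Zop Δ D (root Δ D) * prodDesc (layer Δ D γ β) (min j k) (max j k - 1) *
        Zop Δ D (root Δ D) * prodDesc (layer Δ D γ β) 1 (min j k - 1))
      (plus Δ D))

/-- The Hermitian `G` matrix entry `G^(herm,Δ,D)_{j,k} = ⟨Ψ_j^(Δ,D), Ψ_k^(Δ,D)⟩`. -/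
def Gherm (Δ D p : ℕ) (γ β : ℕ → ℝ) (j k : ℕ) : ℂ :=
  inner ℂ (psiZ Δ D p γ β j) (psiZ Δ D p γ β k)

end QAOA

end

open QAOA

noncomputable section Aux

namespace QAOAAux

open Matrix

section RingHelpers

variable {R : Type*} [Ring R]

lemma cc_mul {P X Y : R} (hX : P * X = X * P) (hY : P * Y = Y * P) :
    P * (X * Y) = X * Y * P := by
  rw [← mul_assoc, hX, mul_assoc, hY, ← mul_assoc]

lemma ca_mul {P X Y : R} (hX : P * X = X * P) (hY : P * Y = -(Y * P)) :
    P * (X * Y) = -(X * Y * P) := by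
  rw [← mul_assoc, hX, mul_assoc, hY, mul_neg, ← mul_assoc]

lemma ac_mul {P X Y : R} (hX : P * X = -(X * P)) (hY : P * Y = Y * P) :
    P * (X * Y) = -(X * Y * P) := by
  rw [← mul_assoc, hX, neg_mul, mul_assoc, hY, ← mul_assoc]

lemma aa_mul {P X Y : R} (hX : P * X = -(X * P)) (hY : P * Y = -(Y * P)) :
    P * (X * Y) = X * Y * P := by
  rw [← mul_assoc, hX, neg_mul, mul_assoc, hY, mul_neg, neg_neg, ← mul_assoc]

end RingHelpers

variable {Δ D : ℕ}

/-- The global spin-flip permutation matrix. -/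
def Pop (Δ D : ℕ) : Matrix (Spin Δ D) (Spin Δ D) ℂ :=
  Matrix.of fun σ τ => if τ = -σ then 1 else 0

lemma Pop_mul_apply (M : Matrix (Spin Δ D) (Spin Δ D) ℂ) (σ τ : Spin Δ D) :
    (Pop Δ D * M) σ τ = M (-σ) τ := by
  simp [Pop, Matrix.mul_apply, ite_mul]

lemma mul_Pop_apply (M : Matrix (Spin Δ D) (Spin Δ D) ℂ) (σ τ : Spin Δ D) :
    (M * Pop Δ D) σ τ = M σ (-τ) := by
  simp only [Pop, Matrix.mul_apply, Matrix.of_apply, mul_ite, mul_one, mul_zero]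
  have h : ∀ ρ : Spin Δ D, (τ = -ρ) = (ρ = -τ) := fun ρ =>
    propext ⟨fun h => by rw [h, neg_neg], fun h => by rw [h, neg_neg]⟩
  simp_rw [h]
  simp

lemma Pop_sq : Pop Δ D * Pop Δ D = 1 := by
  ext σ τ
  rw [Pop_mul_apply]
  simp only [Pop, Matrix.of_apply, Matrix.one_apply, neg_neg]
  by_cases h : τ = σ
  · rw [if_pos h, if_pos h.symm]
  · rw [if_neg h, if_neg fun hh => h hh.symm]

lemma Pop_herm : (Pop Δ D)ᴴ = Pop Δ D := by
  ext σ τ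
  simp only [Matrix.conjTranspose_apply, Pop, Matrix.of_apply]
  by_cases h : τ = -σ
  · have h' : σ = -τ := by rw [h, neg_neg]
    rw [if_pos h', star_one, if_pos h]
  · have h' : ¬σ = -τ := fun hc => h (by rw [hc, neg_neg])
    rw [if_neg h', star_zero, if_neg h]

lemma Pop_mul_Zop (v : Vertex Δ D) :
    Pop Δ D * Zop Δ D v = -(Zop Δ D v * Pop Δ D) := by
  ext σ τ
  rw [Pop_mul_apply, Matrix.neg_apply, mul_Pop_apply]
  simp only [Zop, Matrix.diagonal_apply]
  by_cases h : τ = -σ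
  · have h' : σ = -τ := by rw [h, neg_neg]
    rw [if_pos h.symm, if_pos h', Pi.neg_apply, Units.val_neg, Int.cast_neg]
  · have h1 : ¬(-σ = τ) := fun hc => h hc.symm
    have h2 : ¬(σ = -τ) := fun hc => h (by rw [hc, neg_neg])
    rw [if_neg h1, if_neg h2, neg_zero]

lemma neg_update (τ : Spin Δ D) (v : Vertex Δ D) (x : ℤˣ) :
    -(Function.update τ v x) = Function.update (-τ) v (-x) := by
  funext w
  by_cases h : w = v <;> simp [h, Function.update_apply]

lemma Pop_mul_Xop (v : Vertex Δ D) :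
    Pop Δ D * Xop Δ D v = Xop Δ D v * Pop Δ D := by
  ext σ τ
  rw [Pop_mul_apply, mul_Pop_apply]
  simp only [Xop, Matrix.of_apply]
  have h1 : Function.update (-τ) v (-(-τ) v) = -(Function.update τ v (-τ v)) := by
    rw [neg_update, neg_neg]
    congr 1
    simp [Pi.neg_apply]
  simp only [h1, neg_eq_iff_eq_neg]

lemma Pop_mul_ZZ (v w : Vertex Δ D) :
    Pop Δ D * (Zop Δ D v * Zop Δ D w) = Zop Δ D v * Zop Δ D w * Pop Δ D :=
  aa_mul (Pop_mul_Zop v) (Pop_mul_Zop w)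

set_option maxHeartbeats 1000000 in
lemma Pop_comm_Cop : Pop Δ D * Cop Δ D = Cop Δ D * Pop Δ D := by
  unfold Cop
  rw [Matrix.mul_smul, Matrix.smul_mul]
  apply congrArg
  rw [Matrix.mul_sum, Matrix.sum_mul]
  refine Finset.sum_congr rfl fun v _ => ?_
  rw [Matrix.mul_sum, Matrix.sum_mul]
  refine Finset.sum_congr rfl fun j _ => ?_
  split_ifs with h
  · exact Pop_mul_ZZ _ _
  · simp

lemma Pop_comm_Bop : Pop Δ D * Bop Δ D = Bop Δ D * Pop Δ D := by
  unfold Bop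
  rw [Matrix.mul_sum, Matrix.sum_mul]
  exact Finset.sum_congr rfl fun v _ => Pop_mul_Xop v

/-- `Pop` as a unit (it is its own inverse). -/
def PopUnit (Δ D : ℕ) : (Matrix (Spin Δ D) (Spin Δ D) ℂ)ˣ :=
  ⟨Pop Δ D, Pop Δ D, Pop_sq, Pop_sq⟩

set_option maxHeartbeats 1000000 in
lemma Pop_comm_exp (A : Matrix (Spin Δ D) (Spin Δ D) ℂ)
    (h : Pop Δ D * A = A * Pop Δ D) :
    Pop Δ D * NormedSpace.exp A = NormedSpace.exp A * Pop Δ D := by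
  have hconj : Pop Δ D * A * Pop Δ D = A := by
    rw [h, mul_assoc, Pop_sq, mul_one]
  have he : NormedSpace.exp (Pop Δ D * A * Pop Δ D) =
      Pop Δ D * NormedSpace.exp A * Pop Δ D :=
    Matrix.exp_units_conj (PopUnit Δ D) A
  rw [hconj] at he
  conv_lhs => rw [he]
  rw [← mul_assoc, ← mul_assoc, Pop_sq, one_mul]

lemma Pop_comm_smul_exp (c : ℂ) (A : Matrix (Spin Δ D) (Spin Δ D) ℂ)
    (h : Pop Δ D * A = A * Pop Δ D) :
    Pop Δ D * NormedSpace.exp (c • A) = NormedSpace.exp (c • A) * Pop Δ D := by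
  apply Pop_comm_exp
  rw [Matrix.mul_smul, Matrix.smul_mul, h]

lemma Pop_comm_layer (γ β : ℕ → ℝ) (t : ℕ) :
    Pop Δ D * layer Δ D γ β t = layer Δ D γ β t * Pop Δ D := by
  unfold layer
  exact cc_mul (Pop_comm_smul_exp _ _ Pop_comm_Bop) (Pop_comm_smul_exp _ _ Pop_comm_Cop)

lemma Pop_comm_prodDesc (γ β : ℕ → ℝ) (a b : ℕ) :
    Pop Δ D * prodDesc (layer Δ D γ β) a b = prodDesc (layer Δ D γ β) a b * Pop Δ D := by
  unfold prodDesc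
  refine Commute.list_prod_right _ _ fun x hx => ?_
  simp only [List.mem_map, List.mem_reverse, List.mem_range'_1] at hx
  obtain ⟨t, _, rfl⟩ := hx
  exact Pop_comm_layer γ β t

lemma mApply_mul (M N : Matrix (Spin Δ D) (Spin Δ D) ℂ) (x : Hs Δ D) :
    mApply (M * N) x = mApply M (mApply N x) := by
  simp [mApply, Matrix.mulVec_mulVec]

lemma mApply_one (x : Hs Δ D) : mApply (1 : Matrix (Spin Δ D) (Spin Δ D) ℂ) x = x := by
  simp [mApply]

lemma mApply_neg (M : Matrix (Spin Δ D) (Spin Δ D) ℂ) (x : Hs Δ D) :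
    mApply (-M) x = -(mApply M x) := by
  simp only [mApply, Matrix.neg_mulVec]
  rfl

lemma mApply_eq_toEuclideanLin (M : Matrix (Spin Δ D) (Spin Δ D) ℂ) (x : Hs Δ D) :
    mApply M x = Matrix.toEuclideanLin M x := rfl

lemma inner_mApply_left (M : Matrix (Spin Δ D) (Spin Δ D) ℂ) (x y : Hs Δ D) :
    (inner ℂ (mApply M x) y : ℂ) = inner ℂ x (mApply Mᴴ y) := by
  rw [mApply_eq_toEuclideanLin, mApply_eq_toEuclideanLin,
    Matrix.toEuclideanLin_conjTranspose_eq_adjoint, LinearMap.adjoint_inner_right]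

set_option maxHeartbeats 1000000 in
lemma mApply_Pop_plus : mApply (Pop Δ D) (plus Δ D) = plus Δ D := by
  unfold mApply plus
  rw [Equiv.apply_symm_apply]
  apply congrArg
  funext σ
  simp [Matrix.mulVec, dotProduct, Pop, ite_mul]

lemma inner_Pop_Pop (x y : Hs Δ D) :
    (inner ℂ (mApply (Pop Δ D) x) (mApply (Pop Δ D) y) : ℂ) = inner ℂ x y := by
  rw [inner_mApply_left, Pop_herm, ← mApply_mul, Pop_sq, mApply_one]

lemma Zop_herm (v : Vertex Δ D) : (Zop Δ D v)ᴴ = Zop Δ D v := by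
  ext σ τ
  simp only [Matrix.conjTranspose_apply, Zop, Matrix.diagonal_apply]
  by_cases h : σ = τ
  · subst h
    simp
  · have h' : ¬τ = σ := fun hh => h hh.symm
    rw [if_neg h', star_zero, if_neg h]

lemma flip_invol (v : Vertex Δ D) :
    Function.Involutive (fun σ : Spin Δ D => Function.update σ v (-(σ v))) := by
  intro σ
  funext w
  by_cases h : w = v <;> simp [h, Function.update_apply]

lemma Xop_herm (v : Vertex Δ D) : (Xop Δ D v)ᴴ = Xop Δ D v := by
  ext σ τ
  simp only [Matrix.conjTranspose_apply, Xop, Matrix.of_apply]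
  rw [apply_ite (star : ℂ → ℂ), star_one, star_zero]
  have h := (flip_invol (Δ := Δ) (D := D) v).eq_iff (x := τ) (y := σ)
  have hiff : (τ = Function.update σ v (-σ v)) ↔ (σ = Function.update τ v (-τ v)) :=
    ⟨fun hh => (h.mpr hh).symm, fun hh => h.mp hh.symm⟩
  simp only [hiff]

lemma Bop_herm : (Bop Δ D)ᴴ = Bop Δ D := by
  unfold Bop
  rw [Matrix.conjTranspose_sum]
  exact Finset.sum_congr rfl fun v _ => Xop_herm v

lemma Zop_commZ (v w : Vertex Δ D) : Zop Δ D v * Zop Δ D w = Zop Δ D w * Zop Δ D v := by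
  simp [Zop, Matrix.diagonal_mul_diagonal, mul_comm]

set_option maxHeartbeats 1000000 in
lemma Cop_herm : (Cop Δ D)ᴴ = Cop Δ D := by
  unfold Cop
  rw [Matrix.conjTranspose_smul]
  rw [star_inv₀, Complex.star_def, Complex.conj_ofReal]
  apply congrArg
  rw [Matrix.conjTranspose_sum]
  refine Finset.sum_congr rfl fun v _ => ?_
  rw [Matrix.conjTranspose_sum]
  refine Finset.sum_congr rfl fun j _ => ?_
  split_ifs with h
  · rw [Matrix.conjTranspose_mul, Zop_herm, Zop_herm, Zop_commZ]
  · simp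

lemma layer_conjTranspose (γ β : ℕ → ℝ) (t : ℕ) :
    (layer Δ D γ β t)ᴴ = layerAdj Δ D γ β t := by
  have hs : ∀ r : ℝ, star (-(Complex.I * (r : ℂ))) = Complex.I * (r : ℂ) := by
    intro r
    rw [star_neg, star_mul', Complex.star_def, Complex.conj_ofReal, Complex.conj_I]
    ring
  have h1 : ((-(Complex.I * (γ t : ℂ))) • Cop Δ D)ᴴ = (Complex.I * (γ t : ℂ)) • Cop Δ D := by
    rw [Matrix.conjTranspose_smul, hs, Cop_herm]
  have h2 : ((-(Complex.I * (β t : ℂ))) • Bop Δ D)ᴴ = (Complex.I * (β t : ℂ)) • Bop Δ D := by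
    rw [Matrix.conjTranspose_smul, hs, Bop_herm]
  unfold layer layerAdj
  rw [Matrix.conjTranspose_mul, ← Matrix.exp_conjTranspose, ← Matrix.exp_conjTranspose, h1, h2]

lemma prodDesc_conjTranspose (f : ℕ → Matrix (Spin Δ D) (Spin Δ D) ℂ) (a b : ℕ) :
    (prodDesc f a b)ᴴ = prodAsc (fun t => (f t)ᴴ) a b := by
  unfold prodDesc prodAsc
  rw [Matrix.conjTranspose_list_prod]
  simp only [List.map_reverse, List.reverse_reverse, List.map_map]
  rfl

lemma prodDesc_layer_conjTranspose (γ β : ℕ → ℝ) (p : ℕ) :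
    (prodDesc (layer Δ D γ β) 1 p)ᴴ = prodAsc (layerAdj Δ D γ β) 1 p := by
  have hfun : (fun t => (layer Δ D γ β t)ᴴ) = layerAdj Δ D γ β :=
    funext (layer_conjTranspose γ β)
  rw [prodDesc_conjTranspose, hfun]

lemma Pop_anti_psiZ_mat (γ β : ℕ → ℝ) (p l : ℕ) :
    Pop Δ D * (prodDesc (layer Δ D γ β) l p * Zop Δ D (root Δ D) *
        prodDesc (layer Δ D γ β) 1 (l - 1)) =
      -(prodDesc (layer Δ D γ β) l p * Zop Δ D (root Δ D) *
        prodDesc (layer Δ D γ β) 1 (l - 1) * Pop Δ D) :=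
  ac_mul (ca_mul (Pop_comm_prodDesc γ β l p) (Pop_mul_Zop _))
    (Pop_comm_prodDesc γ β 1 (l - 1))

lemma Pop_comm_psiZZ_mat (γ β : ℕ → ℝ) (p l m : ℕ) :
    Pop Δ D * (prodDesc (layer Δ D γ β) m p * Zop Δ D (root Δ D) *
        prodDesc (layer Δ D γ β) l (m - 1) * Zop Δ D (root Δ D) *
        prodDesc (layer Δ D γ β) 1 (l - 1)) =
      prodDesc (layer Δ D γ β) m p * Zop Δ D (root Δ D) *
        prodDesc (layer Δ D γ β) l (m - 1) * Zop Δ D (root Δ D) *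
        prodDesc (layer Δ D γ β) 1 (l - 1) * Pop Δ D :=
  cc_mul
    (aa_mul
      (ac_mul (ca_mul (Pop_comm_prodDesc γ β m p) (Pop_mul_Zop _))
        (Pop_comm_prodDesc γ β l (m - 1)))
      (Pop_mul_Zop _))
    (Pop_comm_prodDesc γ β 1 (l - 1))

lemma mApply_Pop_psi (p : ℕ) (γ β : ℕ → ℝ) :
    mApply (Pop Δ D) (psi Δ D p γ β) = psi Δ D p γ β := by
  unfold psi
  rw [← mApply_mul, Pop_comm_prodDesc, mApply_mul, mApply_Pop_plus]

lemma mApply_Pop_psiZ (p : ℕ) (γ β : ℕ → ℝ) (l : ℕ) :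
    mApply (Pop Δ D) (psiZ Δ D p γ β l) = -(psiZ Δ D p γ β l) := by
  unfold psiZ
  rw [← mApply_mul, Pop_anti_psiZ_mat, mApply_neg, mApply_mul, mApply_Pop_plus]

lemma mApply_Pop_psiZZ (p : ℕ) (γ β : ℕ → ℝ) (l m : ℕ) :
    mApply (Pop Δ D) (psiZZ Δ D p γ β l m) = psiZZ Δ D p γ β l m := by
  unfold psiZZ
  rw [← mApply_mul, Pop_comm_psiZZ_mat, mApply_mul, mApply_Pop_plus]

end QAOAAux

end Aux

open QAOAAux

/-- Orthogonality relations among the QAOA states on the alternative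
Bethe lattice: (i) `⟨Ψ, Ψ_l⟩ = 0`; (ii) `⟨Ψ_l, Ψ_{m,n}⟩ = 0`;
(iii) `⟨Ψ, Ψ_{l,m}⟩ = G^(sym,Δ,D)_{l,m}`. -/
theorem stmt14 (p : ℕ) (hp : 1 ≤ p) (γ β : ℕ → ℝ) (Δ D : ℕ) (hD : 1 ≤ D) :
    (∀ l, 1 ≤ l → l ≤ p →
        (inner ℂ (psi Δ D p γ β) (psiZ Δ D p γ β l) : ℂ) = 0) ∧
      (∀ l m n, 1 ≤ l → l ≤ p → 1 ≤ m → m < n → n ≤ p →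
        (inner ℂ (psiZ Δ D p γ β l) (psiZZ Δ D p γ β m n) : ℂ) = 0) ∧
      (∀ l m, 1 ≤ l → l < m → m ≤ p →
        (inner ℂ (psi Δ D p γ β) (psiZZ Δ D p γ β l m) : ℂ) = Gsym Δ D p γ β l m) := by
  refine ⟨?_, ?_, ?_⟩
  · intro l _ _
    have key : (inner ℂ (psi Δ D p γ β) (psiZ Δ D p γ β l) : ℂ) =
        - inner ℂ (psi Δ D p γ β) (psiZ Δ D p γ β l) := by
      conv_lhs => rw [← inner_Pop_Pop, mApply_Pop_psi, mApply_Pop_psiZ, inner_neg_right]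
    linear_combination key / 2
  · intro l m n _ _ _ _ _
    have key : (inner ℂ (psiZ Δ D p γ β l) (psiZZ Δ D p γ β m n) : ℂ) =
        - inner ℂ (psiZ Δ D p γ β l) (psiZZ Δ D p γ β m n) := by
      conv_lhs => rw [← inner_Pop_Pop, mApply_Pop_psiZ, mApply_Pop_psiZZ, inner_neg_left]
    linear_combination key / 2
  · intro l m _ hlm _
    have hmat : Matrix.conjTranspose (prodDesc (layer Δ D γ β) 1 p) *
        (prodDesc (layer Δ D γ β) m p * Zop Δ D (root Δ D) *
          prodDesc (layer Δ D γ β) l (m - 1) * Zop Δ D (root Δ D) *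
          prodDesc (layer Δ D γ β) 1 (l - 1)) =
        prodAsc (layerAdj Δ D γ β) 1 p * prodDesc (layer Δ D γ β) m p *
          Zop Δ D (root Δ D) * prodDesc (layer Δ D γ β) l (m - 1) *
          Zop Δ D (root Δ D) * prodDesc (layer Δ D γ β) 1 (l - 1) := by
      rw [prodDesc_layer_conjTranspose]
      simp only [mul_assoc]
    unfold psi psiZZ Gsym
    rw [inner_mApply_left, ← mApply_mul, hmat, min_eq_left hlm.le, max_eq_right hlm.le]
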